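/- Let a > 0, let t₀ > 0 and u₀, u_t⁰ ∈ ℝ, and let α, β : (0,∞) → ℝ be differentiable with α'(t) = sin(t^a)·cos(t) and β'(t) = −sin(t^a)·sin(t) for all t > 0, and α(t₀) = u₀·sin(t₀) + u_t⁰·cos(t₀), β(t₀) = u₀·cos(t₀) − u_t⁰·sin(t₀). Then u(t) = α(t)·sin(t) + β(t)·cos(t) is twice differentiable on (0,∞) and satisfies u''(t) + u(t) = sin(t^a) for all t > 0, with u(t₀) = u₀ and u'(t₀) = u_t⁰. (Reconstruction of the solution of the driven harmonic oscillator from the left moving frame.) -/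

import Mathlib

/-- Reconstruction of the solution of the driven harmonic oscillator
`u_tt + u = sin(t^a)` from the left moving frame `(α, β)`. -/
theorem driven_oscillator_reconstruction
    (a t₀ u₀ ut₀ : ℝ) (ha : 0 < a) (ht₀ : 0 < t₀)
    (α β u : ℝ → ℝ)
    (hα : ∀ t ∈ Set.Ioi (0 : ℝ), HasDerivAt α (Real.sin (t ^ a) * Real.cos t) t)
    (hβ : ∀ t ∈ Set.Ioi (0 : ℝ), HasDerivAt β (-Real.sin (t ^ a) * Real.sin t) t)
    (hα0 : α t₀ = u₀ * Real.sin t₀ + ut₀ * Real.cos t₀)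
    (hβ0 : β t₀ = u₀ * Real.cos t₀ - ut₀ * Real.sin t₀)
    (hu : ∀ t, u t = α t * Real.sin t + β t * Real.cos t) :
    (∀ t ∈ Set.Ioi (0 : ℝ),
      DifferentiableAt ℝ u t ∧
      DifferentiableAt ℝ (deriv u) t ∧
      deriv (deriv u) t + u t = Real.sin (t ^ a)) ∧
    u t₀ = u₀ ∧ deriv u t₀ = ut₀ := by
  have hueq : u = fun t => α t * Real.sin t + β t * Real.cos t := funext hu
  -- first derivative
  have hu' : ∀ t ∈ Set.Ioi (0 : ℝ),
      HasDerivAt u (α t * Real.cos t - β t * Real.sin t) t := by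
    intro t ht
    have h := (((hα t ht).mul (Real.hasDerivAt_sin t)).add
      ((hβ t ht).mul (Real.hasDerivAt_cos t)))
    rw [hueq]
    refine h.congr_deriv ?_
    ring
  have hderiv : ∀ t ∈ Set.Ioi (0 : ℝ),
      deriv u t = α t * Real.cos t - β t * Real.sin t := fun t ht => (hu' t ht).deriv
  have hev : ∀ t ∈ Set.Ioi (0 : ℝ),
      deriv u =ᶠ[nhds t] fun s => α s * Real.cos s - β s * Real.sin s := by
    intro t ht
    filter_upwards [isOpen_Ioi.mem_nhds ht] with s hs using hderiv s hs
  have hu'' : ∀ t ∈ Set.Ioi (0 : ℝ),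
      HasDerivAt (deriv u) (Real.sin (t ^ a) - u t) t := by
    intro t ht
    have h := (((hα t ht).mul (Real.hasDerivAt_cos t)).sub
      ((hβ t ht).mul (Real.hasDerivAt_sin t)))
    have h2 : HasDerivAt (fun s => α s * Real.cos s - β s * Real.sin s)
        (Real.sin (t ^ a) - u t) t := by
      refine h.congr_deriv (Eq.symm ?_)
      rw [hu t]
      linear_combination -Real.sin (t ^ a) * Real.sin_sq_add_cos_sq t
    exact h2.congr_of_eventuallyEq (hev t ht)
  refine ⟨fun t ht => ⟨(hu' t ht).differentiableAt, (hu'' t ht).differentiableAt, ?_⟩,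
    ?_, ?_⟩
  · rw [(hu'' t ht).deriv]; ring
  · rw [hu t₀, hα0, hβ0]
    linear_combination u₀ * Real.sin_sq_add_cos_sq t₀
  · rw [hderiv t₀ ht₀, hα0, hβ0]
    linear_combination ut₀ * Real.sin_sq_add_cos_sq t₀
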